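/- Deviation of pseudo discounted mean-variance: with η = (1-α) μ (I - αP)^{-1} r, ξ = (1-α) μ (I - αP)^{-1} [r - β (r - η e)_⊙^2], and ξ_λ = (1-α) μ (I - αP)^{-1} [r - β (r - λ e)_⊙^2], one has ξ_λ = ξ - β (η - λ)^2 for every λ ∈ ℝ. -/
import Mathlib


open Matrix

attribute [local instance] Matrix.linftyOpNormedAddCommGroup Matrix.linftyOpNormedSpace
  Matrix.linftyOpNormedRing Matrix.linftyOpNormedAlgebra

lemma aux_isUnit {n : ℕ} (P : Matrix (Fin n) (Fin n) ℝ)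
    (hPnn : ∀ i j, 0 ≤ P i j) (hProw : ∀ i, ∑ j, P i j = 1)
    {α : ℝ} (hα0 : 0 < α) (hα1 : α < 1) : IsUnit (1 - α • P) := by
  haveI : CompleteSpace (Matrix (Fin n) (Fin n) ℝ) := FiniteDimensional.complete ℝ _
  have hP : ‖P‖₊ ≤ 1 := by
    rw [Matrix.linfty_opNNNorm_def]
    apply Finset.sup_le
    intro i _
    have : ((∑ j, ‖P i j‖₊ : NNReal) : ℝ) = 1 := by
      push_cast
      rw [← hProw i]
      exact Finset.sum_congr rfl fun j _ => by
        simp [Real.norm_eq_abs, abs_of_nonneg (hPnn i j)]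
    exact_mod_cast this.le
  have h : ‖α • P‖ < 1 := by
    rw [norm_smul, Real.norm_eq_abs, abs_of_pos hα0]
    calc α * ‖P‖ ≤ α * 1 := by
          apply mul_le_mul_of_nonneg_left _ hα0.le
          exact_mod_cast hP
      _ < 1 := by linarith
  exact (Units.oneSub (α • P) h).isUnit

/-- Deviation of the pseudo discounted mean-variance: `ξ_λ = ξ - β (η - λ)²`. -/
theorem stmt_7 {n : ℕ} (P : Matrix (Fin n) (Fin n) ℝ)
    (hPnn : ∀ i j, 0 ≤ P i j) (hProw : ∀ i, ∑ j, P i j = 1)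
    (μ : Fin n → ℝ) (hμnn : ∀ i, 0 ≤ μ i) (hμsum : ∑ i, μ i = 1)
    (r : Fin n → ℝ) (α β : ℝ) (hα0 : 0 < α) (hα1 : α < 1) (hβ : 0 < β)
    (η ξ : ℝ) (l : ℝ) (ξl : ℝ)
    (hη : η = (1 - α) * ((μ ᵥ* (1 - α • P)⁻¹) ⬝ᵥ r))
    (hξ : ξ = (1 - α) * ((μ ᵥ* (1 - α • P)⁻¹) ⬝ᵥ (fun i => r i - β * (r i - η) ^ 2)))
    (hξl : ξl = (1 - α) * ((μ ᵥ* (1 - α • P)⁻¹) ⬝ᵥ (fun i => r i - β * (r i - l) ^ 2))) :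
    ξl = ξ - β * (η - l) ^ 2 := by
  have hα : (1 : ℝ) - α ≠ 0 := by linarith
  set A := (1 : Matrix (Fin n) (Fin n) ℝ) - α • P with hA
  have hunit : IsUnit A := aux_isUnit P hPnn hProw hα0 hα1
  have hdet : IsUnit A.det := (Matrix.isUnit_iff_isUnit_det A).mp hunit
  have hA1 : A *ᵥ (fun _ => (1 : ℝ)) = fun _ => 1 - α := by
    funext i
    simp [hA, Matrix.sub_mulVec, Matrix.mulVec, dotProduct, ← Finset.mul_sum,
      hProw i, Matrix.one_apply, Finset.sum_ite_eq]
  have hinv1 : A⁻¹ *ᵥ (fun _ => (1 : ℝ)) = fun _ => (1 - α)⁻¹ := by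
    have h2 : A⁻¹ *ᵥ (A *ᵥ (fun _ => (1 : ℝ))) = fun _ => 1 := by
      rw [Matrix.mulVec_mulVec, Matrix.nonsing_inv_mul A hdet, Matrix.one_mulVec]
    rw [hA1] at h2
    have h3 : A⁻¹ *ᵥ (fun _ => (1 : ℝ) - α) = (1 - α) • (A⁻¹ *ᵥ fun _ => (1 : ℝ)) := by
      rw [show (fun _ : Fin n => (1 : ℝ) - α) = (1 - α) • (fun _ : Fin n => (1 : ℝ)) from
        funext fun i => by simp, Matrix.mulVec_smul]
    rw [h3] at h2
    funext i
    have h4 := congrFun h2 i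
    simp only [Pi.smul_apply, smul_eq_mul] at h4
    exact eq_inv_of_mul_eq_one_left (by linarith [h4])
  set w := μ ᵥ* A⁻¹ with hw
  have hw1 : ∑ i, w i = (1 - α)⁻¹ := by
    have : w ⬝ᵥ (fun _ => (1 : ℝ)) = μ ⬝ᵥ (A⁻¹ *ᵥ fun _ => (1 : ℝ)) :=
      (Matrix.dotProduct_mulVec μ A⁻¹ _).symm
    rw [hinv1] at this
    simp only [dotProduct, mul_one] at this
    rw [this, ← Finset.sum_mul, hμsum, one_mul]
  have hwr : (1 - α) * (w ⬝ᵥ r) = η := hη.symm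
  have key : w ⬝ᵥ (fun i => r i - β * (r i - l) ^ 2) -
      w ⬝ᵥ (fun i => r i - β * (r i - η) ^ 2) =
      β * (l - η) * 2 * (w ⬝ᵥ r) - β * (l - η) * (η + l) * (∑ i, w i) := by
    simp only [dotProduct, Finset.mul_sum, ← Finset.sum_sub_distrib]
    exact Finset.sum_congr rfl fun i _ => by ring
  have hfinal : ξl - ξ = (1 - α) * (β * (l - η) * 2 * (w ⬝ᵥ r) -
      β * (l - η) * (η + l) * (1 - α)⁻¹) := by
    rw [hξl, hξ, ← mul_sub, key, hw1]
  rw [mul_sub, show (1 - α) * (β * (l - η) * 2 * (w ⬝ᵥ r)) =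
      β * (l - η) * 2 * ((1 - α) * (w ⬝ᵥ r)) by ring, hwr] at hfinal
  rw [show (1 - α) * (β * (l - η) * (η + l) * (1 - α)⁻¹) =
      β * (l - η) * (η + l) * ((1 - α) * (1 - α)⁻¹) by ring, mul_inv_cancel₀ hα] at hfinal
  nlinarith [hfinal]
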